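/- If a connected finite quiver admits a strictly positive conserved current, then the quiver is strongly connected, i.e., for any two vertices i, j there exists an oriented path from i to j. -/

import Mathlib

open Relation

/-- One directed step along an arrow of the quiver. -/
def QStep {V A : Type} (s t : A → V) (i j : V) : Prop := ∃ a : A, s a = i ∧ t a = j

/-- One undirected step along an arrow of the quiver. -/
def UStep {V A : Type} (s t : A → V) (i j : V) : Prop :=
  ∃ a : A, (s a = i ∧ t a = j) ∨ (s a = j ∧ t a = i)

/-- A current is conserved if at each vertex the incoming total equals the outgoing total. -/
def Conserved {V A : Type} [Fintype A] [DecidableEq V] (s t : A → V) (lam : A → ℝ) : Prop :=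
  ∀ i : V, ∑ a ∈ Finset.univ.filter (fun a => t a = i), lam a
         = ∑ a ∈ Finset.univ.filter (fun a => s a = i), lam a

/-- A simple oriented cycle of the quiver: a nonempty cyclically composable list of arrows
whose sources are pairwise distinct. -/
structure SimpleCycle {V A : Type} (s t : A → V) where
  arrows : List A
  nonempty : arrows ≠ []
  chain : ∀ k : ℕ, ∀ h : k < arrows.length,
    t (arrows.get ⟨k, h⟩) =
      s (arrows.get ⟨(k + 1) % arrows.length, Nat.mod_lt _ (List.length_pos_iff.mpr nonempty)⟩)
  simple : (arrows.map s).Nodup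

/-- Key lemma: along any arrow, the source is reachable from the target. -/
lemma reverse_reach {V A : Type} [Fintype V] [Fintype A] [DecidableEq V]
    (s t : A → V) (lam : A → ℝ)
    (hpos : ∀ a : A, 0 < lam a)
    (hcons : Conserved s t lam) (a : A) :
    Relation.ReflTransGen (QStep s t) (t a) (s a) := by
  classical
  set S : Finset V := Finset.univ.filter
    (fun v => Relation.ReflTransGen (QStep s t) (t a) v) with hS
  have hmemS : ∀ v, v ∈ S ↔ Relation.ReflTransGen (QStep s t) (t a) v := by
    intro v; simp [hS]
  -- sum conservation over S
  have hsum : ∑ b ∈ Finset.univ.filter (fun b => t b ∈ S), lam b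
      = ∑ b ∈ Finset.univ.filter (fun b => s b ∈ S), lam b := by
    rw [← Finset.sum_fiberwise_eq_sum_filter Finset.univ S t lam,
        ← Finset.sum_fiberwise_eq_sum_filter Finset.univ S s lam]
    exact Finset.sum_congr rfl (fun i _ => hcons i)
  -- S is closed under outgoing arrows
  have hsub : Finset.univ.filter (fun b => s b ∈ S)
      ⊆ Finset.univ.filter (fun b => t b ∈ S) := by
    intro b hb
    simp only [Finset.mem_filter, Finset.mem_univ, true_and] at hb ⊢
    exact (hmemS (t b)).2 (((hmemS (s b)).1 hb).tail ⟨b, rfl, rfl⟩)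
  by_contra hns
  have hta : a ∈ Finset.univ.filter (fun b => t b ∈ S) := by
    simp only [Finset.mem_filter, Finset.mem_univ, true_and]
    exact (hmemS (t a)).2 .refl
  have hsa : a ∉ Finset.univ.filter (fun b => s b ∈ S) := by
    simp only [Finset.mem_filter, Finset.mem_univ, true_and]
    exact fun h => hns ((hmemS (s a)).1 h)
  have : ∑ b ∈ Finset.univ.filter (fun b => s b ∈ S), lam b
      < ∑ b ∈ Finset.univ.filter (fun b => t b ∈ S), lam b :=
    Finset.sum_lt_sum_of_subset hsub hta hsa (hpos a)
      (fun b _ _ => (hpos b).le)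
  linarith [hsum]

/-- If a connected finite quiver admits a strictly positive conserved current,
then it is strongly connected. -/
theorem stmt1 {V A : Type} [Fintype V] [Fintype A] [DecidableEq V]
    (s t : A → V) (lam : A → ℝ)
    (hconn : ∀ i j : V, Relation.ReflTransGen (UStep s t) i j)
    (hpos : ∀ a : A, 0 < lam a)
    (hcons : Conserved s t lam) :
    ∀ i j : V, Relation.ReflTransGen (QStep s t) i j := by
  intro i j
  induction hconn i j with
  | refl => exact .refl
  | tail _ hstep ih =>
      obtain ⟨a, hcase⟩ := hstep
      rcases hcase with ⟨hsa, hta⟩ | ⟨hsa, hta⟩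
      · exact ih.tail ⟨a, hsa, hta⟩
      · exact ih.trans (hta ▸ hsa ▸ reverse_reach s t lam hpos hcons a)
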